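/- Let w** be an A_p* weight with constants a, c, and let g : (0,1] → [0,∞) be decreasing, right continuous, not a.e. zero, with ∫_0^1 g = f and ∫_0^1 g^p w** = F < ∞. Then c f^p ≤ (p-1)^{p-1} a^p F. -/

import Mathlib

open MeasureTheory Set Filter intervalIntegral

/-- Let `w**` be an `A_p^*` weight with constants `a, c`, and let
`g : (0,1] → [0,∞)` be decreasing, right continuous, not a.e. zero, with
`∫_0^1 g = f` and `∫_0^1 g^p w** = F < ∞`. Then `c f^p ≤ (p-1)^(p-1) a^p F`. -/
theorem ApStar_domain_condition (p a c f F : ℝ) (hp : 1 < p)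
    (ha : 0 < a) (hc : 0 < c) (w g : ℝ → ℝ)
    (hwpos : ∀ t ∈ Set.Ioc (0 : ℝ) 1, 0 < w t)
    (hloc : ∀ t ∈ Set.Ioc (0 : ℝ) 1,
      IntervalIntegrable (fun s => w s / s ^ p) MeasureTheory.volume t 1)
    (hAp : ∀ t ∈ Set.Ioc (0 : ℝ) 1,
      (∫ s in t..1, w s / s ^ p) + c ≤ a * w t / t ^ (p - 1))
    (hlim : Filter.Tendsto (fun t : ℝ => t ^ p * ∫ s in t..1, w s / s ^ p)
      (nhdsWithin 0 (Set.Ioi 0)) (nhds 0))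
    (hg0 : ∀ t ∈ Set.Ioc (0 : ℝ) 1, 0 ≤ g t)
    (hganti : AntitoneOn g (Set.Ioc 0 1))
    (hgrc : ∀ t ∈ Set.Ioc (0 : ℝ) 1, ContinuousWithinAt g (Set.Ici t) t)
    (hgne : ¬ (∀ᵐ t ∂(MeasureTheory.volume.restrict (Set.Ioc (0 : ℝ) 1)), g t = 0))
    (hgint : MeasureTheory.IntegrableOn g (Set.Ioc 0 1))
    (hf : (∫ t in Set.Ioc (0 : ℝ) 1, g t) = f)
    (hFint : MeasureTheory.IntegrableOn (fun t => g t ^ p * w t) (Set.Ioc 0 1))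
    (hF : (∫ t in Set.Ioc (0 : ℝ) 1, g t ^ p * w t) = F) :
    c * f ^ p ≤ (p - 1) ^ (p - 1) * a ^ p * F := by
  have hp0 : (0:ℝ) < p := lt_trans one_pos hp
  have hp1 : (0:ℝ) < p - 1 := sub_pos.2 hp
  set W : ℝ → ℝ := fun t => ∫ s in t..1, w s / s ^ p with hWdef
  set u : ℝ → ℝ := fun t => W t + c with hudef
  -- continuity of W on [ε,1]
  have hWcont : ∀ ε : ℝ, 0 < ε → ε ≤ 1 → ContinuousOn W (Set.Icc ε 1) := by
    intro ε hε hε1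
    have hint : IntervalIntegrable (fun s => w s / s ^ p) volume ε 1 := hloc ε ⟨hε, hε1⟩
    have h1 := intervalIntegral.continuousOn_primitive_interval' hint
      (a := 1) (by rw [Set.uIcc_of_le hε1]; exact Set.right_mem_Icc.2 hε1)
    rw [Set.uIcc_of_le hε1] at h1
    refine ContinuousOn.congr h1.neg ?_
    intro x _
    simp [hWdef, intervalIntegral.integral_symm 1 x]
  -- W is nonnegative on (0,1]
  have hWnn : ∀ t ∈ Set.Ioc (0:ℝ) 1, 0 ≤ W t := by
    intro t ht
    apply intervalIntegral.integral_nonneg ht.2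
    intro s hs
    have hs0 : 0 < s := lt_of_lt_of_le ht.1 hs.1
    exact div_nonneg (hwpos s ⟨hs0, hs.2⟩).le (Real.rpow_pos_of_pos hs0 p).le
  have hupos : ∀ t ∈ Set.Ioc (0:ℝ) 1, c ≤ u t := fun t ht => by
    simpa [hudef] using hWnn t ht
  -- pointwise A_p consequence
  have hAp' : ∀ t ∈ Set.Ioc (0:ℝ) 1, t ^ (p-1) * u t ≤ a * w t := by
    intro t ht
    have h1 := hAp t ht
    have htp : (0:ℝ) < t ^ (p-1) := Real.rpow_pos_of_pos ht.1 _
    rw [le_div_iff₀ htp] at h1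
    calc t ^ (p-1) * u t = (W t + c) * t ^ (p-1) := by rw [hudef]; ring
    _ ≤ a * w t := h1
  have hvle : ∀ s ∈ Set.Ioc (0:ℝ) 1, u s / s ≤ a * (w s / s ^ p) := by
    intro s hs
    have hs0 : 0 < s := hs.1
    have hsp : s ^ p = s ^ (p-1) * s := by
      rw [show p = (p-1) + 1 by ring, Real.rpow_add hs0, Real.rpow_one]; ring_nf
    have h1 := hAp' s hs
    have hsp1 : (0:ℝ) < s ^ (p-1) := Real.rpow_pos_of_pos hs0 _
    have hspp : (0:ℝ) < s ^ p := Real.rpow_pos_of_pos hs0 _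
    rw [div_le_iff₀ hs0, hsp]
    have heq : a * (w s / (s ^ (p-1) * s)) * s = a * w s / s ^ (p-1) := by
      field_simp
    rw [heq, le_div_iff₀ hsp1, mul_comm]
    exact h1
  -- Grönwall lower bound : u t ≥ c * t ^ (-1/a)
  have gron : ∀ t₀ ∈ Set.Ioc (0:ℝ) 1, c * t₀ ^ (-(1/a)) ≤ u t₀ := by
    intro t₀ ht₀
    obtain ⟨ht00, ht01⟩ := ht₀
    have h2 : (0:ℝ) < t₀/2 := by linarith
    have h21 : t₀/2 ≤ 1 := by linarith
    have hWc2 : ContinuousOn W (Set.Icc (t₀/2) 1) := hWcont _ h2 h21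
    set v : ℝ → ℝ := fun s => u s / s with hvdef
    have hvcont : ContinuousOn v (Set.Icc (t₀/2) 1) := by
      apply ContinuousOn.div (hWc2.add continuousOn_const) continuousOn_id
      intro x hx; exact ne_of_gt (lt_of_lt_of_le h2 hx.1)
    set A : ℝ → ℝ := fun t => ∫ s in t..1, v s with hAdef
    have hvint : ∀ t, t₀/2 ≤ t → t ≤ 1 → IntervalIntegrable v volume t 1 := by
      intro t h1t h2t
      apply ContinuousOn.intervalIntegrable
      apply hvcont.mono
      rw [Set.uIcc_of_le h2t]
      exact Set.Icc_subset_Icc h1t le_rfl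
    -- A ≤ a * W on [t₀, 1]
    have hAle : ∀ t, t₀ ≤ t → t ≤ 1 → A t ≤ a * W t := by
      intro t h1t h2t
      have ht0 : 0 < t := lt_of_lt_of_le ht00 h1t
      have h1 : IntervalIntegrable v volume t 1 := hvint t (by linarith) h2t
      have h2' : IntervalIntegrable (fun s => a * (w s / s ^ p)) volume t 1 :=
        (hloc t ⟨ht0, h2t⟩).const_mul a
      have h3 := intervalIntegral.integral_mono_on h2t h1 h2'
        (fun s hs => hvle s ⟨lt_of_lt_of_le ht0 hs.1, hs.2⟩)
      rw [intervalIntegral.integral_const_mul] at h3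
      exact h3
    -- continuity of A on [t₀,1]
    have hAcont : ContinuousOn A (Set.Icc t₀ 1) := by
      have hint : IntervalIntegrable v volume t₀ 1 := hvint t₀ (by linarith) ht01
      have h1 := intervalIntegral.continuousOn_primitive_interval' hint
        (a := 1) (by rw [Set.uIcc_of_le ht01]; exact Set.right_mem_Icc.2 ht01)
      rw [Set.uIcc_of_le ht01] at h1
      refine ContinuousOn.congr h1.neg ?_
      intro x _
      simp [hAdef, intervalIntegral.integral_symm 1 x]
    -- derivative of A
    have hA' : ∀ τ ∈ Set.Ioo t₀ 1, HasDerivAt A (-(v τ)) τ := by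
      intro τ hτ
      have hτ2 : t₀/2 < τ := by linarith [hτ.1]
      have hvcontAt : ContinuousAt v τ :=
        hvcont.continuousAt (Icc_mem_nhds hτ2 hτ.2)
      have hii : IntervalIntegrable v volume 1 τ := (hvint τ hτ2.le hτ.2.le).symm
      have hmeas : StronglyMeasurableAtFilter v (nhds τ) := by
        have hop : IsOpen (Set.Ioo (t₀/2) 1) := isOpen_Ioo
        exact (hvcont.mono Set.Ioo_subset_Icc_self).stronglyMeasurableAtFilter hop τ ⟨hτ2, hτ.2⟩
      have hd := intervalIntegral.integral_hasDerivAt_right hii hmeas hvcontAt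
      have hd2 := hd.neg
      refine HasDerivAt.congr_of_eventuallyEq hd2 ?_
      filter_upwards with x
      simp [hAdef, intervalIntegral.integral_symm 1 x]
    -- B is antitone
    set B : ℝ → ℝ := fun t => t ^ (1/a) * (A t / a + c) with hBdef
    have hBanti : AntitoneOn B (Set.Icc t₀ 1) := by
      apply antitoneOn_of_hasDerivWithinAt_nonpos (convex_Icc _ _)
        (f' := fun τ => (1/a) * τ ^ (1/a - 1) * (A τ / a + c) + τ ^ (1/a) * (-(v τ) / a))
      · apply ContinuousOn.mul
        · exact continuousOn_id.rpow_const fun x hx =>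
            Or.inl (ne_of_gt (lt_of_lt_of_le ht00 hx.1))
        · exact (hAcont.div_const a).add continuousOn_const
      · rw [interior_Icc]
        intro τ hτ
        have hτ0 : 0 < τ := lt_of_lt_of_le ht00 hτ.1.le
        have h1 : HasDerivAt (fun t : ℝ => t ^ (1/a)) ((1/a) * τ ^ (1/a - 1)) τ :=
          Real.hasDerivAt_rpow_const (Or.inl hτ0.ne')
        have h2 : HasDerivAt (fun t => A t / a + c) (-(v τ) / a) τ :=
          ((hA' τ hτ).div_const a).add_const c
        exact ((h1.mul h2)).hasDerivWithinAt
      · rw [interior_Icc]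
        intro τ hτ
        have hτ0 : 0 < τ := lt_of_lt_of_le ht00 hτ.1.le
        have hτIoc : τ ∈ Set.Ioc (0:ℝ) 1 := ⟨hτ0, hτ.2.le⟩
        have hup : A τ / a + c ≤ u τ := by
          have := hAle τ hτ.1.le hτ.2.le
          have h4 : A τ / a ≤ W τ := by
            rw [div_le_iff₀ ha]; linarith [this, mul_comm a (W τ)]
          simp only [hudef]; linarith
        have hx1 : τ ^ (1/a) * v τ = τ ^ (1/a - 1) * u τ := by
          rw [hvdef]
          rw [Real.rpow_sub hτ0, Real.rpow_one]
          field_simp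
        have hpw : (0:ℝ) < τ ^ (1/a - 1) := Real.rpow_pos_of_pos hτ0 _
        have key : (1/a) * τ ^ (1/a - 1) * (A τ / a + c) + τ ^ (1/a) * (-(v τ) / a)
            = τ ^ (1/a - 1) / a * ((A τ / a + c) - u τ) := by
          have : τ ^ (1/a) * (-(v τ) / a) = -(τ ^ (1/a - 1) * u τ) / a := by
            rw [← hx1]; ring
          rw [this]; ring
        rw [key]
        apply mul_nonpos_of_nonneg_of_nonpos
        · positivity
        · linarith
    -- conclude
    have hB1 : B 1 = c := by
      simp [hBdef, hAdef, Real.one_rpow]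
    have hBt : c ≤ B t₀ := by
      have := hBanti (Set.left_mem_Icc.2 ht01) (Set.right_mem_Icc.2 ht01) ht01
      rw [hB1] at this; exact this
    have hA2 : A t₀ / a ≤ W t₀ := by
      have := hAle t₀ le_rfl ht01
      rw [div_le_iff₀ ha]; linarith [mul_comm a (W t₀)]
    have htpow : (0:ℝ) < t₀ ^ (1/a) := Real.rpow_pos_of_pos ht00 _
    have h5 : c ≤ t₀ ^ (1/a) * u t₀ := by
      calc c ≤ B t₀ := hBt
      _ = t₀ ^ (1/a) * (A t₀ / a + c) := rfl
      _ ≤ t₀ ^ (1/a) * u t₀ := by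
          apply mul_le_mul_of_nonneg_left _ htpow.le
          simp only [hudef]; linarith
    have hinv : t₀ ^ (-(1/a)) * t₀ ^ (1/a) = 1 := by
      rw [← Real.rpow_add ht00]; simp
    calc c * t₀ ^ (-(1/a)) = t₀ ^ (-(1/a)) * c := by ring
    _ ≤ t₀ ^ (-(1/a)) * (t₀ ^ (1/a) * u t₀) := by
        apply mul_le_mul_of_nonneg_left h5 (Real.rpow_pos_of_pos ht00 _).le
    _ = u t₀ := by rw [← mul_assoc, hinv, one_mul]
  -- ===== Hölder part =====
  set μ := MeasureTheory.volume.restrict (Set.Ioc (0:ℝ) 1) with hμdef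
  have haeIoc : ∀ᵐ t ∂μ, t ∈ Set.Ioc (0:ℝ) 1 := ae_restrict_mem measurableSet_Ioc
  have hf0 : 0 ≤ f := by
    rw [← hf]; exact setIntegral_nonneg measurableSet_Ioc hg0
  have hF0 : 0 ≤ F := by
    rw [← hF]
    apply setIntegral_nonneg measurableSet_Ioc
    intro t ht
    exact mul_nonneg (Real.rpow_nonneg (hg0 t ht) p) (hwpos t ht).le
  have hWcontOn : ContinuousOn W (Set.Ioc 0 1) := by
    intro t ht
    have h2 : (0:ℝ) < t/2 := by linarith [ht.1]
    have hc2 := hWcont (t/2) h2 (by linarith [ht.2])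
    have h3 : ContinuousWithinAt W (Set.Icc (t/2) 1) t := hc2 t ⟨by linarith [ht.1], ht.2⟩
    apply h3.mono_of_mem_nhdsWithin
    apply mem_nhdsWithin.2
    exact ⟨Set.Ioi (t/2), isOpen_Ioi, by simpa using (by linarith [ht.1] : t/2 < t),
      fun x hx => ⟨hx.1.le, hx.2.2⟩⟩
  have humeas : AEMeasurable u μ :=
    ((hWcontOn.aemeasurable measurableSet_Ioc).add aemeasurable_const)
  have hgmeas : AEMeasurable g μ := hgint.aestronglyMeasurable.aemeasurable
  set φ : ℝ → ENNReal := fun t => ENNReal.ofReal (t ^ (p-1) * u t) with hφdef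
  have hφmeas : AEMeasurable φ μ := by
    apply ENNReal.measurable_ofReal.comp_aemeasurable
    exact ((measurable_id.pow_const (p-1)).aemeasurable.mul humeas)
  set q := p / (p - 1) with hqdef
  have hpq : Real.HolderConjugate p q :=
    (Real.holderConjugate_iff_eq_conjExponent hp).2 hqdef
  have hq0 : 0 < q := hpq.symm.pos
  set f₁ : ℝ → ENNReal := fun t => ENNReal.ofReal (g t) * φ t ^ (1/p) with hf₁def
  set f₂ : ℝ → ENNReal := fun t => φ t ^ (-(1/p)) with hf₂def
  have hf₁meas : AEMeasurable f₁ μ :=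
    (ENNReal.measurable_ofReal.comp_aemeasurable hgmeas).mul (hφmeas.pow_const (1/p))
  have hf₂meas : AEMeasurable f₂ μ := hφmeas.pow_const (-(1/p))
  have hφpt : ∀ t ∈ Set.Ioc (0:ℝ) 1, 0 < t ^ (p-1) * u t := fun t ht =>
    mul_pos (Real.rpow_pos_of_pos ht.1 _) (lt_of_lt_of_le hc (hupos t ht))
  have hφne0 : ∀ t ∈ Set.Ioc (0:ℝ) 1, φ t ≠ 0 := fun t ht =>
    (ENNReal.ofReal_pos.2 (hφpt t ht)).ne'
  have hprod : ∀ t ∈ Set.Ioc (0:ℝ) 1, f₁ t * f₂ t = ENNReal.ofReal (g t) := by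
    intro t ht
    simp only [hf₁def, hf₂def]
    rw [mul_assoc, ← ENNReal.rpow_add _ _ (hφne0 t ht) ENNReal.ofReal_ne_top]
    norm_num
  have hf₁bound : ∀ t ∈ Set.Ioc (0:ℝ) 1,
      f₁ t ^ p ≤ ENNReal.ofReal (a * (g t ^ p * w t)) := by
    intro t ht
    have hg0t := hg0 t ht
    have h1 : f₁ t ^ p = ENNReal.ofReal (g t) ^ p * φ t := by
      simp only [hf₁def]
      rw [ENNReal.mul_rpow_of_nonneg _ _ hp0.le, ← ENNReal.rpow_mul,
        one_div_mul_cancel hp0.ne', ENNReal.rpow_one]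
    rw [h1, ENNReal.ofReal_rpow_of_nonneg hg0t hp0.le]
    calc ENNReal.ofReal (g t ^ p) * φ t
        ≤ ENNReal.ofReal (g t ^ p) * ENNReal.ofReal (a * w t) :=
          mul_le_mul_right (ENNReal.ofReal_le_ofReal (hAp' t ht)) _
    _ = ENNReal.ofReal (g t ^ p * (a * w t)) :=
        (ENNReal.ofReal_mul (Real.rpow_nonneg hg0t p)).symm
    _ = ENNReal.ofReal (a * (g t ^ p * w t)) := by ring_nf
  set β : ℝ := 1/(a*(p-1)) with hβdef
  have hβ0 : 0 < β := by positivity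
  have hf₂bound : ∀ t ∈ Set.Ioc (0:ℝ) 1,
      f₂ t ^ q ≤ ENNReal.ofReal (c ^ (-(1/(p-1))) * t ^ (β - 1)) := by
    intro t ht
    have ht0 := ht.1
    have h1 : f₂ t ^ q = φ t ^ (-(1/(p-1))) := by
      simp only [hf₂def]
      rw [← ENNReal.rpow_mul]
      congr 1
      rw [hqdef]
      field_simp
    have h2 : φ t ^ (-(1/(p-1))) = ENNReal.ofReal ((t ^ (p-1) * u t) ^ (-(1/(p-1)))) := by
      rw [ENNReal.ofReal_rpow_of_pos (hφpt t ht)]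
    rw [h1, h2]
    apply ENNReal.ofReal_le_ofReal
    have hlow : c * t ^ (p - 1 - 1/a) ≤ t ^ (p-1) * u t := by
      have hg := gron t ht
      calc c * t ^ (p - 1 - 1/a) = t ^ (p-1) * (c * t ^ (-(1/a))) := by
            rw [show p - 1 - 1/a = (p-1) + (-(1/a)) by ring, Real.rpow_add ht0]; ring
      _ ≤ t ^ (p-1) * u t :=
            mul_le_mul_of_nonneg_left hg (Real.rpow_pos_of_pos ht0 _).le
    have hcl : 0 < c * t ^ (p - 1 - 1/a) := by
      have := Real.rpow_pos_of_pos ht0 (p - 1 - 1/a); positivity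
    have hexp : -(1/(p-1)) ≤ 0 := by
      have : 0 < 1/(p-1) := by positivity
      linarith
    have h3 := Real.rpow_le_rpow_of_nonpos hcl hlow hexp
    refine h3.trans_eq ?_
    rw [Real.mul_rpow hc.le (Real.rpow_nonneg ht0.le _), ← Real.rpow_mul ht0.le]
    congr 1
    rw [hβdef]
    field_simp
    ring
  have hint1 : ∫⁻ t, (f₁ * f₂) t ∂μ = ENNReal.ofReal f := by
    have he : ∀ᵐ t ∂μ, (f₁ * f₂) t = ENNReal.ofReal (g t) :=
      haeIoc.mono (fun t ht => by simpa using hprod t ht)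
    rw [lintegral_congr_ae he,
      ← MeasureTheory.ofReal_integral_eq_lintegral_ofReal hgint (haeIoc.mono hg0), hf]
  have hint2 : ∫⁻ t, f₁ t ^ p ∂μ ≤ ENNReal.ofReal (a * F) := by
    have h1 : ∫⁻ t, f₁ t ^ p ∂μ ≤ ∫⁻ t, ENNReal.ofReal (a * (g t ^ p * w t)) ∂μ :=
      lintegral_mono_ae (haeIoc.mono (hf₁bound))
    rw [← MeasureTheory.ofReal_integral_eq_lintegral_ofReal (hFint.const_mul a)
      (haeIoc.mono fun t ht => mul_nonneg ha.le
        (mul_nonneg (Real.rpow_nonneg (hg0 t ht) p) (hwpos t ht).le))] at h1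
    rwa [MeasureTheory.integral_const_mul, hF] at h1
  have hint3 : ∫⁻ t, f₂ t ^ q ∂μ ≤ ENNReal.ofReal (c ^ (-(1/(p-1))) * (a*(p-1))) := by
    have h1 : ∫⁻ t, f₂ t ^ q ∂μ
        ≤ ∫⁻ t, ENNReal.ofReal (c ^ (-(1/(p-1))) * t ^ (β - 1)) ∂μ :=
      lintegral_mono_ae (haeIoc.mono (hf₂bound))
    have hii : IntervalIntegrable (fun t : ℝ => t ^ (β - 1)) volume 0 1 :=
      intervalIntegral.intervalIntegrable_rpow' (by linarith)
    have hIcc : IntegrableOn (fun t : ℝ => c ^ (-(1/(p-1))) * t ^ (β - 1)) (Set.Ioc 0 1) := by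
      apply Integrable.const_mul
      exact (intervalIntegrable_iff_integrableOn_Ioc_of_le zero_le_one).mp hii
    have hval : ∫ t in Set.Ioc (0:ℝ) 1, t ^ (β - 1) = a * (p - 1) := by
      rw [← intervalIntegral.integral_of_le zero_le_one,
        integral_rpow (Or.inl (by linarith)),
        show β - 1 + 1 = β by ring, Real.one_rpow, Real.zero_rpow hβ0.ne', hβdef]
      field_simp
      norm_num
    rw [← MeasureTheory.ofReal_integral_eq_lintegral_ofReal hIcc
      (haeIoc.mono fun t ht => mul_nonneg (Real.rpow_nonneg hc.le _)
        (Real.rpow_nonneg ht.1.le _))] at h1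
    rwa [MeasureTheory.integral_const_mul, hval] at h1
  have Hold := ENNReal.lintegral_mul_le_Lp_mul_Lq μ hpq hf₁meas hf₂meas
  rw [hint1] at Hold
  set K : ℝ := c ^ (-(1/(p-1))) * (a*(p-1)) with hKdef
  have hK0 : 0 < K := by
    have := Real.rpow_pos_of_pos hc (-(1/(p-1))); positivity
  have key : ENNReal.ofReal f
      ≤ (ENNReal.ofReal (a*F)) ^ (1/p) * (ENNReal.ofReal K) ^ (1/q) :=
    Hold.trans (mul_le_mul' (ENNReal.rpow_le_rpow hint2 (by positivity))
      (ENNReal.rpow_le_rpow hint3 (by positivity)))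
  have key2 : (ENNReal.ofReal f) ^ p
      ≤ ENNReal.ofReal (a*F) * ENNReal.ofReal (K ^ (p-1)) := by
    calc (ENNReal.ofReal f) ^ p
        ≤ ((ENNReal.ofReal (a*F)) ^ (1/p) * (ENNReal.ofReal K) ^ (1/q)) ^ p :=
          ENNReal.rpow_le_rpow key hp0.le
    _ = (ENNReal.ofReal (a*F)) ^ ((1/p)*p) * (ENNReal.ofReal K) ^ ((1/q)*p) := by
          rw [ENNReal.mul_rpow_of_nonneg _ _ hp0.le, ← ENNReal.rpow_mul, ← ENNReal.rpow_mul]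
    _ = ENNReal.ofReal (a*F) * (ENNReal.ofReal K) ^ (p - 1) := by
          rw [one_div_mul_cancel hp0.ne', ENNReal.rpow_one, hqdef, one_div_div,
            div_mul_cancel₀ _ hp0.ne']
    _ = ENNReal.ofReal (a*F) * ENNReal.ofReal (K ^ (p-1)) := by
          rw [ENNReal.ofReal_rpow_of_pos hK0]
  have key3 : f ^ p ≤ (a*F) * K ^ (p-1) := by
    have h1 : ENNReal.ofReal (f ^ p) ≤ ENNReal.ofReal ((a*F) * K ^ (p-1)) := by
      rw [← ENNReal.ofReal_rpow_of_nonneg hf0 hp0.le,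
        ENNReal.ofReal_mul (mul_nonneg ha.le hF0)]
      exact key2
    rwa [ENNReal.ofReal_le_ofReal_iff
      (mul_nonneg (mul_nonneg ha.le hF0) (Real.rpow_nonneg hK0.le _))] at h1
  have hKp : K ^ (p-1) = c⁻¹ * (a ^ (p-1) * (p-1) ^ (p-1)) := by
    rw [hKdef, Real.mul_rpow (Real.rpow_nonneg hc.le _) (by positivity)]
    congr 1
    · rw [← Real.rpow_mul hc.le, show -(1/(p-1)) * (p-1) = -1 by field_simp,
        Real.rpow_neg_one]
    · rw [Real.mul_rpow ha.le hp1.le]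
  have hap : a ^ (p-1) * a = a ^ p := by
    rw [← Real.rpow_add_one ha.ne' (p-1)]; ring_nf
  rw [hKp] at key3
  have final := mul_le_mul_of_nonneg_left key3 hc.le
  calc c * f ^ p ≤ c * (a * F * (c⁻¹ * (a ^ (p-1) * (p-1) ^ (p-1)))) := final
  _ = (a ^ (p-1) * a) * (p-1) ^ (p-1) * F * (c * c⁻¹) := by ring
  _ = (p - 1) ^ (p - 1) * a ^ p * F := by
      rw [hap, mul_inv_cancel₀ hc.ne']; ring
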